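/- Let n, r ∈ ℕ, let l(v) = l0 + ∑_{i=1}^n l_i v_i be an affine form with integer coefficients, let q(v) = ∑_{1≤i<j≤n} q_{ij} v_i v_j be a quadratic form with integer coefficients, and let L_1, …, L_r be affine forms in v with integer coefficients. Then the function Ψ : {0,1}^n → ℂ defined by Ψ(v) = i^{l(v)} · (−1)^{q(v)} · ∏_{j=1}^r [L_j(v) ≡ 0 (mod 2)] (where [P] is 1 if P holds and 0 otherwise) is exactly representable by an RBM with at most n(n−1)/2 + r hidden neurons. -/

import Mathlib

open Complex

noncomputable def RBMs2 : ℂ := ((Real.sqrt 2 : ℝ) : ℂ)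
noncomputable def RBMa : ℂ := (1 + Complex.I * RBMs2) / 3
noncomputable def RBMw : ℂ := Complex.log (2 * RBMa - 1)

lemma RBMs2_sq : RBMs2 ^ 2 = 2 := by
  rw [RBMs2, ← Complex.ofReal_pow, Real.sq_sqrt (by norm_num)]; norm_num

lemma RBMa_ne : RBMa ≠ 0 := by
  intro h
  have := congrArg Complex.re h
  simp [RBMa, RBMs2, Complex.div_re] at this

lemma RBM2a1_ne : 2 * RBMa - 1 ≠ 0 := by
  intro h
  have := congrArg Complex.re h
  simp [RBMa, RBMs2, Complex.div_re] at this
  norm_num at this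

lemma RBMexpw : Complex.exp RBMw = 2 * RBMa - 1 := Complex.exp_log RBM2a1_ne

lemma RBMkey : (2 * RBMa - 1) ^ 2 = -(2 * RBMa ^ 2) - 1 := by
  have hs : RBMs2 ^ 2 = 2 := RBMs2_sq
  have hI : (Complex.I : ℂ) ^ 2 = -1 := Complex.I_sq
  rw [RBMa]
  linear_combination (2/3 : ℂ) * RBMs2 ^ 2 * hI - (2/3 : ℂ) * hs

lemma RBMexp_pi_I_int (k : ℤ) : Complex.exp ((k : ℂ) * (Real.pi * Complex.I)) = (-1 : ℂ) ^ k := by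
  rw [Complex.exp_int_mul, Complex.exp_pi_mul_I]

lemma RBMexp_half_pi_I_int (k : ℤ) :
    Complex.exp ((k : ℂ) * (Real.pi / 2 * Complex.I)) = Complex.I ^ k := by
  rw [Complex.exp_int_mul]
  congr 1
  rw [Complex.exp_mul_I,
    show ((Real.pi : ℂ) / 2) = ((Real.pi / 2 : ℝ) : ℂ) by push_cast; ring,
    ← Complex.ofReal_cos, ← Complex.ofReal_sin, Real.cos_pi_div_two, Real.sin_pi_div_two]
  simp

lemma RBMneg_one_zpow (a : ℤ) : (-1 : ℂ) ^ a = if a % 2 = 0 then 1 else -1 := by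
  rcases Int.even_or_odd a with h | h
  · rw [Even.neg_one_zpow h, if_pos (Int.even_iff.mp h)]
  · rw [Odd.neg_one_zpow h, if_neg (by rw [Int.odd_iff] at h; omega)]

lemma RBMind (k : ℤ) :
    (2 : ℂ)⁻¹ * (1 + Complex.exp ((k : ℂ) * (Real.pi * Complex.I)))
      = if k % 2 = 0 then 1 else 0 := by
  rw [RBMexp_pi_I_int, RBMneg_one_zpow]
  split_ifs <;> norm_num

lemma RBMpair (o : Prop) [Decidable o] (b1 b2 : Bool) :
    (2 : ℂ)⁻¹ * (1 + Complex.exp ((if o then RBMw else 0) * (if b1 then 1 else 0)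
        + (if o then RBMw else 0) * (if b2 then 1 else 0)))
    = RBMa ^ (if o then (((if b1 then 1 else 0) + (if b2 then 1 else 0) : ℕ)) else 0)
      * (-1 : ℂ) ^ (if o then (((if b1 then 1 else 0) * (if b2 then 1 else 0) : ℕ)) else 0) := by
  by_cases h : o <;> cases b1 <;> cases b2 <;>
      simp only [h, if_true, if_false, mul_one, mul_zero, add_zero, zero_add,
        Complex.exp_zero, Complex.exp_add, RBMexpw, pow_zero, pow_one, mul_comm]
  all_goals try norm_num
  all_goals try ring
  all_goals linear_combination ((2 : ℂ)⁻¹) * RBMkey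

lemma RBMsum_pair {n : ℕ} (x : Fin n → ℂ) (c : ℂ) {i0 j0 : Fin n} (h : i0 ≠ j0) :
    ∑ i, (if i = i0 ∨ i = j0 then c else 0) * x i = c * x i0 + c * x j0 := by
  have key : ∀ i, (if i = i0 ∨ i = j0 then c else 0) * x i
      = (if i = i0 then c * x i0 else 0) + (if i = j0 then c * x j0 else 0) := by
    intro i
    by_cases h1 : i = i0 <;> by_cases h2 : i = j0 <;> simp_all
  rw [Finset.sum_congr rfl fun i _ => key i, Finset.sum_add_distrib]
  simp

lemma RBMprod_lt {n : ℕ} {M : Type*} [CommMonoid M] (f : Fin n → Fin n → M) :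
    ∏ p : {p : Fin n × Fin n // p.1 < p.2}, f p.1.1 p.1.2
      = ∏ i, ∏ j, if i < j then f i j else 1 := by
  rw [← Finset.prod_subtype (Finset.univ.filter fun p : Fin n × Fin n => p.1 < p.2)
      (by simp) (fun p : Fin n × Fin n => f p.1 p.2), Finset.prod_filter,
    Fintype.prod_prod_type]

lemma RBMsum_lt {n : ℕ} {M : Type*} [AddCommMonoid M] (f : Fin n → Fin n → M) :
    ∑ p : {p : Fin n × Fin n // p.1 < p.2}, f p.1.1 p.1.2
      = ∑ i, ∑ j, if i < j then f i j else 0 := by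
  rw [← Finset.sum_subtype (Finset.univ.filter fun p : Fin n × Fin n => p.1 < p.2)
      (by simp) (fun p : Fin n × Fin n => f p.1 p.2), Finset.sum_filter,
    Fintype.sum_prod_type]

lemma RBMcard (n : ℕ) :
    Fintype.card {p : Fin n × Fin n // p.1 < p.2} = n * (n - 1) / 2 := by
  have e : {p : Fin n × Fin n // p.1 < p.2} ≃ Σ i : Fin n, {j : Fin n // i < j} :=
    { toFun := fun p => ⟨p.1.1, p.1.2, p.2⟩
      invFun := fun x => ⟨(x.1, x.2.1), x.2.2⟩
      left_inv := fun p => rfl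
      right_inv := fun x => rfl }
  rw [Fintype.card_congr e, Fintype.card_sigma]
  have h : ∀ i : Fin n, Fintype.card {j : Fin n // i < j} = n - 1 - (i : ℕ) := by
    intro i
    rw [show Fintype.card {j : Fin n // i < j}
        = Fintype.card (Set.Ioi i) from Fintype.card_congr
          (Equiv.subtypeEquivRight (by simp [Set.mem_Ioi]))]
    rw [← Set.toFinset_card, Set.toFinset_Ioi]; exact Fin.card_Ioi i
  rw [Finset.sum_congr rfl fun i _ => h i]
  rw [Fin.sum_univ_eq_sum_range (fun i => n - 1 - i) n,
    Finset.sum_range_reflect (fun j => j) n, Finset.sum_range_id]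

lemma RBMcount {n : ℕ} (q : Fin n → Fin n → ℤ) (xn : Fin n → ℕ) :
    (∑ i, ∑ j, if i < j then (if Odd (q i j) then xn i + xn j else 0) else 0)
      = ∑ i, ((∑ j, if i < j ∧ Odd (q i j) then 1 else 0)
            + (∑ j, if j < i ∧ Odd (q j i) then 1 else 0)) * xn i := by
  classical
  have h1 : ∀ i j : Fin n, (if i < j then (if Odd (q i j) then xn i + xn j else 0) else 0)
      = (if i < j ∧ Odd (q i j) then xn i else 0)
        + (if i < j ∧ Odd (q i j) then xn j else 0) := by
    intro i j
    by_cases h : i < j <;> by_cases h' : Odd (q i j) <;> simp [h, h']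
  simp only [h1, Finset.sum_add_distrib]
  have hA : (∑ i, ∑ j, if i < j ∧ Odd (q i j) then xn i else 0)
      = ∑ i, (∑ j, if i < j ∧ Odd (q i j) then 1 else 0) * xn i := by
    refine Finset.sum_congr rfl fun i _ => ?_
    rw [Finset.sum_mul]
    refine Finset.sum_congr rfl fun j _ => ?_
    split_ifs <;> simp
  have hB : (∑ i, ∑ j, if i < j ∧ Odd (q i j) then xn j else 0)
      = ∑ i, (∑ j, if j < i ∧ Odd (q j i) then 1 else 0) * xn i := by
    rw [Finset.sum_comm]
    refine Finset.sum_congr rfl fun i _ => ?_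
    rw [Finset.sum_mul]
    refine Finset.sum_congr rfl fun j _ => ?_
    split_ifs <;> simp
  rw [hA, hB, ← Finset.sum_add_distrib]
  refine Finset.sum_congr rfl fun i _ => ?_
  rw [add_mul]

lemma RBMparity {n : ℕ} (q : Fin n → Fin n → ℤ) (v : Fin n → Bool) :
    (∑ i, ∑ j,
        if i < j then q i j * (if v i then 1 else 0) * (if v j then 1 else 0) else 0) % 2
      = ((∑ i, ∑ j, if i < j then (if Odd (q i j) then
          (((if v i then 1 else 0) * (if v j then 1 else 0) : ℕ)) else 0) else 0 : ℕ) : ℤ) % 2 := by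
  classical
  refine (ZMod.intCast_eq_intCast_iff' _ _ 2).mp ?_
  push_cast [apply_ite (fun z : ℤ => (z : ZMod 2)), apply_ite (fun z : ℕ => (z : ZMod 2))]
  refine Finset.sum_congr rfl fun i _ => Finset.sum_congr rfl fun j _ => ?_
  by_cases hij : i < j
  · simp only [hij, if_true]
    by_cases ho : Odd (q i j)
    · have hq : ((q i j : ZMod 2)) = 1 := by
        obtain ⟨k, hk⟩ := ho
        rw [hk]
        push_cast
        have h2 : (2 : ZMod 2) = 0 := by decide
        linear_combination (k : ZMod 2) * h2
      rw [if_pos ho, hq]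
      cases hvi : v i <;> cases hvj : v j <;> simp [hvi, hvj]
    · have hq : ((q i j : ZMod 2)) = 0 := by
        rw [Int.not_odd_iff_even] at ho
        obtain ⟨k, hk⟩ := ho
        rw [hk]
        push_cast
        have h2 : (2 : ZMod 2) = 0 := by decide
        linear_combination (k : ZMod 2) * h2
      rw [if_neg ho, hq]
      simp
  · simp [hij]

/-- A function `f : {0,1}^n → ℂ` is exactly representable by a restricted Boltzmann machine
with `m` hidden neurons if there are complex parameters `a i`, `b j`, `W i j` and a nonzero
constant `C` with
`f v = C · exp(∑ i, a i v i) · ∏ j, (1 + exp(b j + ∑ i, W i j v i))` for all `v ∈ {0,1}^n`. -/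
def RBMRepresentable (n m : ℕ) (f : (Fin n → Bool) → ℂ) : Prop :=
  ∃ (C : ℂ) (a : Fin n → ℂ) (b : Fin m → ℂ) (W : Fin n → Fin m → ℂ),
    C ≠ 0 ∧ ∀ v : Fin n → Bool,
      f v = C * Complex.exp (∑ i, a i * (if v i then 1 else 0)) *
        ∏ j, (1 + Complex.exp (b j + ∑ i, W i j * (if v i then 1 else 0)))

/-- For any affine form `l(v) = l0 + ∑ lc i · v i`, quadratic form
`q(v) = ∑_{i<j} q i j · v i v j` and affine forms `L_j(v) = L0 j + ∑ Lc j i · v i` with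
integer coefficients, the Pauli-stabilizer-type amplitude
`Ψ(v) = i^{l(v)} (−1)^{q(v)} ∏_j [L_j(v) ≡ 0 (mod 2)]` is exactly representable by an RBM
with at most `n(n−1)/2 + r` hidden neurons. -/
theorem pauli_stabilizer_amplitude_representable
    (n r : ℕ) (l0 : ℤ) (lc : Fin n → ℤ) (q : Fin n → Fin n → ℤ)
    (L0 : Fin r → ℤ) (Lc : Fin r → Fin n → ℤ) :
    ∃ m ≤ n * (n - 1) / 2 + r,
      RBMRepresentable n m (fun v =>
        Complex.I ^ (l0 + ∑ i, lc i * (if v i then 1 else 0)) *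
          (-1 : ℂ) ^ (∑ i, ∑ j,
            if i < j then q i j * (if v i then 1 else 0) * (if v j then 1 else 0) else 0) *
          ∏ j : Fin r,
            (if (L0 j + ∑ i, Lc j i * (if v i then 1 else 0)) % 2 = 0 then 1 else 0)) := by
  classical
  set N := Fintype.card {p : Fin n × Fin n // p.1 < p.2} with hN
  refine ⟨N + r, by rw [hN, RBMcard], ?_⟩
  have hcard : Fintype.card ({p : Fin n × Fin n // p.1 < p.2} ⊕ Fin r) = N + r := by
    simp [hN]
  let e : ({p : Fin n × Fin n // p.1 < p.2} ⊕ Fin r) ≃ Fin (N + r) :=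
    Fintype.equivFinOfCardEq hcard
  let d : Fin n → ℕ := fun i =>
    (∑ j, if i < j ∧ Odd (q i j) then 1 else 0) + (∑ j, if j < i ∧ Odd (q j i) then 1 else 0)
  refine ⟨Complex.I ^ l0 * (2 : ℂ)⁻¹ ^ N * (2 : ℂ)⁻¹ ^ r,
    fun i => (lc i : ℂ) * (Real.pi / 2 * Complex.I) - (d i : ℂ) * Complex.log RBMa,
    fun j => Sum.elim (fun _ => 0) (fun t => (L0 t : ℂ) * (Real.pi * Complex.I)) (e.symm j),
    fun i j => Sum.elim
      (fun p : {p : Fin n × Fin n // p.1 < p.2} =>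
        (if i = p.1.1 ∨ i = p.1.2 then (if Odd (q p.1.1 p.1.2) then RBMw else 0) else 0))
      (fun t => (Lc t i : ℂ) * (Real.pi * Complex.I)) (e.symm j),
    mul_ne_zero (mul_ne_zero (zpow_ne_zero _ Complex.I_ne_zero)
      (pow_ne_zero _ (by norm_num))) (pow_ne_zero _ (by norm_num)), ?_⟩
  intro v
  dsimp only
  -- notation
  set x : Fin n → ℂ := fun i => if v i then 1 else 0 with hx
  set xn : Fin n → ℕ := fun i => if v i then 1 else 0 with hxn
  -- split the product over hidden units
  rw [show (∏ j : Fin (N + r), (1 + Complex.exp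
        ((Sum.elim (fun _ => 0) (fun t => (L0 t : ℂ) * (Real.pi * Complex.I)) (e.symm j)) +
          ∑ i, (Sum.elim
            (fun p : {p : Fin n × Fin n // p.1 < p.2} =>
              (if i = p.1.1 ∨ i = p.1.2 then (if Odd (q p.1.1 p.1.2) then RBMw else 0) else 0))
            (fun t => (Lc t i : ℂ) * (Real.pi * Complex.I)) (e.symm j)) * x i)))
      = (∏ p : {p : Fin n × Fin n // p.1 < p.2}, (1 + Complex.exp
          ((0 : ℂ) + ∑ i, (if i = p.1.1 ∨ i = p.1.2 then
            (if Odd (q p.1.1 p.1.2) then RBMw else 0) else 0) * x i)))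
        * ∏ t : Fin r, (1 + Complex.exp ((L0 t : ℂ) * (Real.pi * Complex.I)
            + ∑ i, (Lc t i : ℂ) * (Real.pi * Complex.I) * x i)) from by
      rw [← Equiv.prod_comp e]
      rw [Fintype.prod_sum_type]
      simp only [Equiv.symm_apply_apply, Sum.elim_inl, Sum.elim_inr]]
  -- affine indicator part
  have hR : (2 : ℂ)⁻¹ ^ r * ∏ t : Fin r, (1 + Complex.exp ((L0 t : ℂ) * (Real.pi * Complex.I)
        + ∑ i, (Lc t i : ℂ) * (Real.pi * Complex.I) * x i))
      = ∏ t : Fin r, (if (L0 t + ∑ i, Lc t i * (if v i then 1 else 0)) % 2 = 0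
          then (1 : ℂ) else 0) := by
    rw [show ((2 : ℂ)⁻¹) ^ r = ∏ _t : Fin r, (2 : ℂ)⁻¹ by simp, ← Finset.prod_mul_distrib]
    refine Finset.prod_congr rfl fun t _ => ?_
    have harg : (L0 t : ℂ) * (Real.pi * Complex.I)
          + ∑ i, (Lc t i : ℂ) * (Real.pi * Complex.I) * x i
        = ((L0 t + ∑ i, Lc t i * (if v i then 1 else 0) : ℤ) : ℂ) * (Real.pi * Complex.I) := by
      push_cast [apply_ite (fun z : ℤ => (z : ℂ))]
      rw [add_mul, Finset.sum_mul]
      congr 1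
      refine Finset.sum_congr rfl fun i _ => ?_
      cases hvi : v i <;> simp [hx, hvi]
    rw [harg, RBMind]
  -- quadratic pair part
  have hPairFactor : ∀ p : {p : Fin n × Fin n // p.1 < p.2},
      (2 : ℂ)⁻¹ * (1 + Complex.exp ((0 : ℂ) + ∑ i, (if i = p.1.1 ∨ i = p.1.2 then
          (if Odd (q p.1.1 p.1.2) then RBMw else 0) else 0) * x i))
      = RBMa ^ (if Odd (q p.1.1 p.1.2) then (xn p.1.1 + xn p.1.2) else 0)
        * (-1 : ℂ) ^ (if Odd (q p.1.1 p.1.2) then (xn p.1.1 * xn p.1.2) else 0) := by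
    intro p
    rw [zero_add, RBMsum_pair x _ (ne_of_lt p.2)]
    have := RBMpair (Odd (q p.1.1 p.1.2)) (v p.1.1) (v p.1.2)
    simpa [hx, hxn] using this
  have hP : (2 : ℂ)⁻¹ ^ N * ∏ p : {p : Fin n × Fin n // p.1 < p.2}, (1 + Complex.exp
        ((0 : ℂ) + ∑ i, (if i = p.1.1 ∨ i = p.1.2 then
          (if Odd (q p.1.1 p.1.2) then RBMw else 0) else 0) * x i))
      = RBMa ^ (∑ i, d i * xn i)
        * (-1 : ℂ) ^ (∑ p : {p : Fin n × Fin n // p.1 < p.2},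
            if Odd (q p.1.1 p.1.2) then (xn p.1.1 * xn p.1.2) else 0) := by
    rw [hN, ← Finset.card_univ, ← Finset.prod_const, ← Finset.prod_mul_distrib,
      Finset.prod_congr rfl fun p _ => hPairFactor p, Finset.prod_mul_distrib,
      Finset.prod_pow_eq_pow_sum, Finset.prod_pow_eq_pow_sum]
    congr 2
    rw [RBMsum_lt (fun i j => if Odd (q i j) then (xn i + xn j) else 0), RBMcount]
  -- the exponential of the linear part
  have hexp : Complex.exp (∑ i, ((lc i : ℂ) * (Real.pi / 2 * Complex.I)
        - (d i : ℂ) * Complex.log RBMa) * x i)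
      = Complex.I ^ (∑ i, lc i * (if v i then 1 else 0))
        * (RBMa ^ (∑ i, d i * xn i))⁻¹ := by
    have hsplit : (∑ i, ((lc i : ℂ) * (Real.pi / 2 * Complex.I)
          - (d i : ℂ) * Complex.log RBMa) * x i)
        = ((∑ i, lc i * (if v i then 1 else 0) : ℤ) : ℂ) * (Real.pi / 2 * Complex.I)
          - ((∑ i, d i * xn i : ℕ) : ℂ) * Complex.log RBMa := by
      push_cast [apply_ite (fun z : ℤ => (z : ℂ))]
      rw [Finset.sum_mul, Finset.sum_mul, ← Finset.sum_sub_distrib]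
      refine Finset.sum_congr rfl fun i _ => ?_
      cases hvi : v i <;> simp [hx, hxn, hvi]
    rw [hsplit, Complex.exp_sub, RBMexp_half_pi_I_int, div_eq_mul_inv]
    congr 1
    rw [Complex.exp_nat_mul, Complex.exp_log RBMa_ne]
  rw [hexp]
  -- the parity of the quadratic part
  have hM : (-1 : ℂ) ^ (∑ i, ∑ j,
        if i < j then q i j * (if v i then 1 else 0) * (if v j then 1 else 0) else 0)
      = (-1 : ℂ) ^ (∑ p : {p : Fin n × Fin n // p.1 < p.2},
          if Odd (q p.1.1 p.1.2) then (xn p.1.1 * xn p.1.2) else 0) := by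
    rw [← zpow_natCast (-1 : ℂ), RBMneg_one_zpow, RBMneg_one_zpow, RBMparity q v]
    rw [RBMsum_lt (fun i j => if Odd (q i j) then (xn i * xn j) else 0)]
  -- final assembly
  have haD : RBMa ^ (∑ i, d i * xn i) ≠ 0 := pow_ne_zero _ RBMa_ne
  rw [hM, zpow_add₀ Complex.I_ne_zero l0]
  calc Complex.I ^ l0 * Complex.I ^ (∑ i, lc i * (if v i then 1 else 0))
        * (-1 : ℂ) ^ (∑ p : {p : Fin n × Fin n // p.1 < p.2},
            if Odd (q p.1.1 p.1.2) then (xn p.1.1 * xn p.1.2) else 0)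
        * ∏ t : Fin r, (if (L0 t + ∑ i, Lc t i * (if v i then 1 else 0)) % 2 = 0
            then (1 : ℂ) else 0)
      = Complex.I ^ l0 * Complex.I ^ (∑ i, lc i * (if v i then 1 else 0))
        * ((RBMa ^ (∑ i, d i * xn i))⁻¹
          * (RBMa ^ (∑ i, d i * xn i) * (-1 : ℂ) ^ (∑ p : {p : Fin n × Fin n // p.1 < p.2},
              if Odd (q p.1.1 p.1.2) then (xn p.1.1 * xn p.1.2) else 0)))
        * ∏ t : Fin r, (if (L0 t + ∑ i, Lc t i * (if v i then 1 else 0)) % 2 = 0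
            then (1 : ℂ) else 0) := by
        rw [inv_mul_cancel_left₀ haD]
    _ = _ := by
        rw [← hP, ← hR]
        ring
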